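/- Let T and T̃ be quantum channels on M_d related by T(ρ) = A · T̃(B ρ B†) · A† for all ρ, where A, B ∈ M_d are invertible matrices. Then T is divisible if and only if T̃ is divisible; equivalently, T is indivisible if and only if T̃ is indivisible. -/

import Mathlib

open Matrix
open scoped Kronecker ComplexOrder

noncomputable section

/-- `Mat d` is the space `M_d` of `d × d` complex matrices. -/
abbrev Mat (d : ℕ) := Matrix (Fin d) (Fin d) ℂ

/-- The Choi matrix `C(T) = Σ_{i,j} E_{ij} ⊗ T(E_{ij})` of a linear map on `M_d`. -/
def choi {d : ℕ} (T : Mat d →ₗ[ℂ] Mat d) :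
    Matrix (Fin d × Fin d) (Fin d × Fin d) ℂ :=
  ∑ i : Fin d, ∑ j : Fin d,
    (single i j (1 : ℂ)) ⊗ₖ T (single i j (1 : ℂ))

/-- A linear map on `M_d` is trace-preserving if it preserves the trace. -/
def IsTracePreserving {d : ℕ} (T : Mat d →ₗ[ℂ] Mat d) : Prop :=
  ∀ A : Mat d, (T A).trace = A.trace

/-- A linear map on `M_d` is completely positive if its Choi matrix is positive
semidefinite. -/
def IsCompletelyPositive {d : ℕ} (T : Mat d →ₗ[ℂ] Mat d) : Prop :=
  (choi T).PosSemidef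

/-- A quantum channel is a completely positive trace-preserving linear map. -/
def IsChannel {d : ℕ} (T : Mat d →ₗ[ℂ] Mat d) : Prop :=
  IsTracePreserving T ∧ IsCompletelyPositive T

/-- A unitary conjugation is a map of the form `A ↦ U * A * Uᴴ` with `U` unitary. -/
def IsUnitaryConj {d : ℕ} (T : Mat d →ₗ[ℂ] Mat d) : Prop :=
  ∃ U : Mat d, U ∈ Matrix.unitaryGroup (Fin d) ℂ ∧ ∀ A : Mat d, T A = U * A * Uᴴ

/-- A channel `T` is divisible if it is a composition of two channels, neither of which
is a unitary conjugation. -/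
def IsDivisible {d : ℕ} (T : Mat d →ₗ[ℂ] Mat d) : Prop :=
  ∃ T₁ T₂ : Mat d →ₗ[ℂ] Mat d, IsChannel T₁ ∧ IsChannel T₂ ∧
    ¬IsUnitaryConj T₁ ∧ ¬IsUnitaryConj T₂ ∧ T = T₁ ∘ₗ T₂

lemma choi_apply {d : ℕ} (T : Mat d →ₗ[ℂ] Mat d) (i a j b : Fin d) :
    choi T (i, a) (j, b) = T (single i j 1) a b := by
  simp only [choi, Finset.sum_apply, Matrix.sum_apply, kroneckerMap_apply]
  rw [Finset.sum_eq_single i, Finset.sum_eq_single j]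
  · simp [single]
  · intro k _ hk; simp [single, hk]
  · simp
  · intro k _ hk
    rw [Finset.sum_eq_zero]
    intro l _
    simp [single, hk]
  · simp

lemma map_eq_sum {d : ℕ} (T : Mat d →ₗ[ℂ] Mat d) (ρ : Mat d) :
    T ρ = ∑ k : Fin d, ∑ l : Fin d, ρ k l • T (single k l 1) := by
  conv_lhs => rw [matrix_eq_sum_single ρ]
  rw [map_sum]
  refine Finset.sum_congr rfl fun k _ => ?_
  rw [map_sum]
  refine Finset.sum_congr rfl fun l _ => ?_
  rw [show single k l (ρ k l) = ρ k l • single k l (1:ℂ) by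
    rw [smul_single, smul_eq_mul, mul_one], _root_.map_smul]

def conjMap {d : ℕ} (M : Mat d) : Mat d →ₗ[ℂ] Mat d where
  toFun ρ := M * ρ * Mᴴ
  map_add' x y := by simp only [Matrix.mul_add, Matrix.add_mul]
  map_smul' c x := by
    simp [Matrix.mul_smul, Matrix.smul_mul]

@[simp] lemma conjMap_apply {d : ℕ} (M ρ : Mat d) : conjMap M ρ = M * ρ * Mᴴ := rfl

lemma conj_stdBasisMatrix {d : ℕ} (N : Mat d) (i j k l : Fin d) :
    (N * single i j (1:ℂ) * Nᴴ) k l = N k i * star (N l j) := by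
  rw [mul_apply]
  rw [Finset.sum_eq_single j]
  · rw [mul_single_apply_same, conjTranspose_apply, mul_one]
  · intro c _ hc
    simp [hc]
  · simp

lemma conj_entry {n : Type*} [Fintype n] (X C : Matrix n n ℂ) (p q : n) :
    (X * C * Xᴴ) p q = ∑ r, ∑ s, X p r * C r s * star (X q s) := by
  simp only [mul_apply, conjTranspose_apply, Finset.sum_mul]
  rw [Finset.sum_comm]

lemma sum4_comm {α : Type*} [AddCommMonoid α] {n : Type*} [Fintype n]
    (f : n → n → n → n → α) :
    (∑ c, ∑ e, ∑ k, ∑ l, f c e k l) = ∑ k, ∑ c, ∑ l, ∑ e, f c e k l := by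
  have h1 : ∀ c : n, (∑ e, ∑ k, ∑ l, f c e k l) = ∑ k, ∑ l, ∑ e, f c e k l := by
    intro c
    rw [Finset.sum_comm]
    exact Finset.sum_congr rfl fun k _ => Finset.sum_comm
  simp only [h1]
  exact Finset.sum_comm

lemma choi_sandwich {d : ℕ} (T : Mat d →ₗ[ℂ] Mat d) (M N : Mat d) :
    choi (conjMap M ∘ₗ T ∘ₗ conjMap N) = (Nᵀ ⊗ₖ M) * choi T * (Nᵀ ⊗ₖ M)ᴴ := by
  ext ⟨i, a⟩ ⟨j, b⟩
  rw [choi_apply, conj_entry]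
  simp only [LinearMap.comp_apply, conjMap_apply]
  rw [conj_entry M]
  have hσ : ∀ c e : Fin d, T (N * single i j 1 * Nᴴ) c e
      = ∑ k, ∑ l, N k i * star (N l j) * T (single k l 1) c e := by
    intro c e
    rw [map_eq_sum T]
    simp only [Matrix.sum_apply, Matrix.smul_apply, smul_eq_mul, conj_stdBasisMatrix]
  simp only [hσ, Finset.mul_sum, Finset.sum_mul]
  rw [sum4_comm]
  simp only [Fintype.sum_prod_type, kroneckerMap_apply, transpose_apply, choi_apply, star_mul']
  refine Finset.sum_congr rfl fun k _ => Finset.sum_congr rfl fun c _ =>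
    Finset.sum_congr rfl fun l _ => Finset.sum_congr rfl fun e _ => ?_
  ring


variable {d : ℕ}

lemma cp_sandwich {T : Mat d →ₗ[ℂ] Mat d} (hT : IsCompletelyPositive T) (M N : Mat d) :
    IsCompletelyPositive (conjMap M ∘ₗ T ∘ₗ conjMap N) := by
  unfold IsCompletelyPositive at *
  rw [choi_sandwich]
  exact hT.mul_mul_conjTranspose_same _

lemma map_apply_sum (T : Mat d →ₗ[ℂ] Mat d) (ρ : Mat d) (a b : Fin d) :
    T ρ a b = ∑ k, ∑ l, ρ k l * T (single k l 1) a b := by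
  rw [map_eq_sum T ρ]
  simp [Matrix.sum_apply]

lemma cp_star_entry {T : Mat d →ₗ[ℂ] Mat d} (hT : IsCompletelyPositive T) (i j a b : Fin d) :
    star (T (single i j 1) a b) = T (single j i 1) b a := by
  have h := hT.1.apply (i, a) (j, b)
  rw [choi_apply, choi_apply] at h
  rw [← h, star_star]

lemma cp_map_conjTranspose {T : Mat d →ₗ[ℂ] Mat d} (hT : IsCompletelyPositive T) (ρ : Mat d) :
    (T ρ)ᴴ = T ρᴴ := by
  ext a b
  rw [conjTranspose_apply, map_apply_sum T ρ b a, map_apply_sum T ρᴴ a b]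
  simp only [star_sum, star_mul']
  rw [Finset.sum_comm]
  refine Finset.sum_congr rfl fun k _ => Finset.sum_congr rfl fun l _ => ?_
  rw [cp_star_entry hT, conjTranspose_apply]

lemma cp_rankone_psd {T : Mat d →ₗ[ℂ] Mat d} (hT : IsCompletelyPositive T) (v : Fin d → ℂ) :
    (T (Matrix.of fun k l => v k * star (v l))).PosSemidef := by
  rw [posSemidef_iff_dotProduct_mulVec]
  constructor
  · have hH : (Matrix.of fun k l => v k * star (v l) : Mat d)ᴴ
        = Matrix.of fun k l => v k * star (v l) := by
      ext k l
      simp only [conjTranspose_apply, of_apply, star_mul', star_star]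
      ring
    show _ᴴ = _
    rw [cp_map_conjTranspose hT, hH]
  · intro x
    set ρ : Mat d := Matrix.of fun k l => v k * star (v l) with hρdef
    have hρ : ∀ a b : Fin d, T ρ a b
        = ∑ k, ∑ l, (v k * star (v l)) * T (single k l 1) a b := by
      intro a b
      rw [map_apply_sum T ρ a b]
      simp only [hρdef, of_apply]
    have key : star x ⬝ᵥ (T ρ) *ᵥ x
        = star (fun p : Fin d × Fin d => star (v p.1) * x p.2) ⬝ᵥ
            choi T *ᵥ (fun p : Fin d × Fin d => star (v p.1) * x p.2) := by
      simp only [dotProduct, mulVec, Pi.star_apply, hρ, Finset.mul_sum, Finset.sum_mul]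
      rw [sum4_comm]
      simp only [Fintype.sum_prod_type, choi_apply, star_mul', star_star]
      refine Finset.sum_congr rfl fun k _ => Finset.sum_congr rfl fun a _ =>
        Finset.sum_congr rfl fun l _ => Finset.sum_congr rfl fun b _ => ?_
      ring
    rw [key]
    exact hT.dotProduct_mulVec_nonneg _

lemma psd_diag_nonneg {Q : Mat d} (hQ : Q.PosSemidef) (a : Fin d) : 0 ≤ Q a a := by
  have h := hQ.dotProduct_mulVec_nonneg (Pi.single a 1)
  simpa [dotProduct, mulVec, Pi.single_apply, Finset.sum_ite_eq, Finset.sum_ite_eq'] using h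

lemma psd_trace_nonneg {Q : Mat d} (hQ : Q.PosSemidef) : 0 ≤ Q.trace := by
  rw [Matrix.trace]
  exact Finset.sum_nonneg fun a _ => psd_diag_nonneg hQ a

open scoped MatrixOrder in
lemma psd_exists_sqrt {Q : Mat d} (hQ : Q.PosSemidef) : ∃ R : Mat d, Rᴴ = R ∧ R * R = Q :=
  ⟨CFC.sqrt Q, (CFC.sqrt_nonneg Q).posSemidef.1, CFC.sqrt_mul_sqrt_self Q hQ.nonneg⟩

lemma psd_trace_eq_zero {Q : Mat d} (hQ : Q.PosSemidef) (h : Q.trace = 0) : Q = 0 := by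
  set R := (psd_exists_sqrt hQ).choose with hRdef
  have hRR : R * R = Q := (psd_exists_sqrt hQ).choose_spec.2
  have hRherm : Rᴴ = R := (psd_exists_sqrt hQ).choose_spec.1
  have hR0 : R = 0 := by
    have htr : Q.trace = ∑ b, ∑ a, star (R a b) * R a b := by
      rw [← hRR]
      nth_rewrite 1 [← hRherm]
      rw [Matrix.trace]
      refine Finset.sum_congr rfl fun b _ => ?_
      simp [Matrix.mul_apply, Matrix.diag, conjTranspose_apply]
    rw [htr] at h
    have hz := (Finset.sum_eq_zero_iff_of_nonneg (fun b _ =>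
      Finset.sum_nonneg fun a _ => star_mul_self_nonneg (R a b))).1 h
    ext a b
    have hz2 := (Finset.sum_eq_zero_iff_of_nonneg (fun a _ =>
      star_mul_self_nonneg (R a b))).1 (hz b (Finset.mem_univ b)) a (Finset.mem_univ a)
    have h3 : (starRingEnd ℂ) (R a b) * R a b = 0 := hz2
    have h4 : Complex.normSq (R a b) = 0 := by
      have h5 := congrArg Complex.re h3
      simpa [Complex.normSq_apply, Complex.mul_re] using h5
    simpa using Complex.normSq_eq_zero.1 h4
  rw [← hRR, hR0, Matrix.mul_zero]

lemma trace_mul_pos {P Q : Mat d} (hP : P.PosDef) (hQ : Q.PosSemidef)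
    (hQtr : Q.trace ≠ 0) : 0 < (P * Q).trace := by
  set S := (psd_exists_sqrt hP.posSemidef).choose with hSdef
  have hSS : S * S = P := (psd_exists_sqrt hP.posSemidef).choose_spec.2
  have hSherm : Sᴴ = S := (psd_exists_sqrt hP.posSemidef).choose_spec.1
  have hdet : IsUnit S.det := by
    have hPdet : IsUnit P.det := (Matrix.isUnit_iff_isUnit_det P).1 hP.isUnit
    rw [← hSS, Matrix.det_mul] at hPdet
    exact isUnit_of_mul_isUnit_left hPdet
  have hM : (S * Q * S).PosSemidef := by
    have := hQ.mul_mul_conjTranspose_same S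
    rwa [hSherm] at this
  have htr : (P * Q).trace = (S * Q * S).trace := by
    rw [← hSS, Matrix.mul_assoc, Matrix.trace_mul_comm, Matrix.mul_assoc]
  rw [htr]
  refine lt_of_le_of_ne (psd_trace_nonneg hM) (Ne.symm fun h0 => ?_)
  have hM0 : S * Q * S = 0 := psd_trace_eq_zero hM h0
  have hQ0 : Q = 0 := by
    have h1 : S⁻¹ * (S * Q * S) * S⁻¹ = Q := by
      rw [show S * Q * S = S * Q * S from rfl, Matrix.mul_assoc S Q S, ← Matrix.mul_assoc S⁻¹,
        Matrix.nonsing_inv_mul _ hdet, Matrix.one_mul, Matrix.mul_assoc Q,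
        Matrix.mul_nonsing_inv _ hdet, Matrix.mul_one]
    rw [← h1, hM0, Matrix.mul_zero, Matrix.zero_mul]
  exact hQtr (by rw [hQ0, Matrix.trace_zero])

lemma posDef_conjTranspose_mul (M : Mat d) (h : IsUnit M) : (Mᴴ * M).PosDef := by
  refine posDef_iff_dotProduct_mulVec.2 ⟨(posSemidef_conjTranspose_mul_self M).1, fun x hx => ?_⟩
  have h1 : star x ⬝ᵥ (Mᴴ * M) *ᵥ x = star (M *ᵥ x) ⬝ᵥ (M *ᵥ x) := by
    rw [← Matrix.mulVec_mulVec, Matrix.dotProduct_mulVec, ← Matrix.star_mulVec]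
  rw [h1]
  rw [Matrix.dotProduct_star_self_pos_iff]
  intro hc
  exact hx ((Matrix.mulVec_injective_iff_isUnit.2 h) (by rw [hc, Matrix.mulVec_zero]))

lemma trace_mul_stdBasis (M : Mat d) (i j : Fin d) :
    (M * single i j 1).trace = M j i := by
  rw [Matrix.trace]
  rw [Finset.sum_eq_single j]
  · simp [Matrix.diag]
  · intro a _ ha
    simp [Matrix.diag, ha]
  · simp

lemma unitary_of_rankone (S : Mat d →ₗ[ℂ] Mat d) (hTP : IsTracePreserving S) (K : Mat d)
    (h : ∀ ρ : Mat d, S ρ = K * ρ * Kᴴ) : IsUnitaryConj S := by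
  have hK : Kᴴ * K = 1 := by
    ext j i
    have htp := hTP (single i j 1)
    rw [h] at htp
    rw [Matrix.trace_mul_cycle] at htp
    rw [trace_mul_stdBasis] at htp
    rw [show (single i j 1 : Mat d) = 1 * single i j 1 by rw [Matrix.one_mul],
      trace_mul_stdBasis] at htp
    exact htp
  refine ⟨K, ?_, h⟩
  rw [Matrix.mem_unitaryGroup_iff, Matrix.star_eq_conjTranspose,
    mul_eq_one_comm]
  exact hK

section Xmat

variable (T₁ : Mat d →ₗ[ℂ] Mat d) (P : Mat d)

def Xmat : Mat d := Matrix.of fun k l => (P * T₁ (single l k 1)).trace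

lemma Xmat_key (ρ : Mat d) :
    (P * T₁ ρ).trace = ∑ a, ∑ b, ρ a b * Xmat T₁ P b a := by
  conv_lhs => rw [map_eq_sum T₁ ρ]
  simp only [Matrix.mul_sum, Matrix.mul_smul, Matrix.trace_sum, Matrix.trace_smul,
    smul_eq_mul]
  rfl

lemma Xmat_trace (σ : Mat d) : (Xmat T₁ P * σ).trace = (P * T₁ σ).trace := by
  rw [Xmat_key]
  rw [Matrix.trace]
  rw [Finset.sum_comm]
  refine Finset.sum_congr rfl fun a _ => ?_
  simp only [Matrix.diag, Matrix.mul_apply]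
  exact Finset.sum_congr rfl fun b _ => mul_comm _ _

end Xmat

lemma stdBasis_conjTranspose (i j : Fin d) :
    (single i j (1:ℂ))ᴴ = single j i 1 := by
  ext a b
  simp only [conjTranspose_apply, single, of_apply]
  by_cases h1 : i = b <;> by_cases h2 : j = a <;> simp [h1, h2]

lemma Xmat_herm {T₁ : Mat d →ₗ[ℂ] Mat d} {P : Mat d} (hcp : IsCompletelyPositive T₁)
    (hP : Pᴴ = P) : (Xmat T₁ P).IsHermitian := by
  ext k l
  rw [Matrix.conjTranspose_apply]
  show star ((P * T₁ (single k l 1)).trace) = (P * T₁ (single l k 1)).trace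
  rw [← Matrix.trace_conjTranspose, Matrix.conjTranspose_mul, cp_map_conjTranspose hcp,
    stdBasis_conjTranspose, hP, Matrix.trace_mul_comm]

lemma Xmat_posdef {T₁ : Mat d →ₗ[ℂ] Mat d} {P : Mat d} (hcp : IsCompletelyPositive T₁)
    (htp : IsTracePreserving T₁) (hP : P.PosDef) : (Xmat T₁ P).PosDef := by
  refine posDef_iff_dotProduct_mulVec.2 ⟨Xmat_herm hcp hP.1, fun v hv => ?_⟩
  have hρ := cp_rankone_psd hcp v
  have h1 : star v ⬝ᵥ Xmat T₁ P *ᵥ v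
      = (P * T₁ (Matrix.of fun a b => v a * star (v b))).trace := by
    rw [Xmat_key]
    simp only [dotProduct, mulVec, Matrix.of_apply, Finset.mul_sum, Pi.star_apply]
    rw [Finset.sum_comm]
    refine Finset.sum_congr rfl fun a _ => Finset.sum_congr rfl fun b _ => ?_
    ring
  rw [h1]
  apply trace_mul_pos hP hρ
  rw [htp]
  have hpos : 0 < v ⬝ᵥ star v := Matrix.dotProduct_self_star_pos_iff.2 hv
  have : (Matrix.of fun a b => v a * star (v b) : Mat d).trace = v ⬝ᵥ star v := by
    simp [Matrix.trace, Matrix.diag, dotProduct]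
  rw [this]
  exact hpos.ne'

lemma sandwich_cancel {A : Mat d} (hA : IsUnit A) (ρ : Mat d) :
    A⁻¹ * (A * ρ * Aᴴ) * (A⁻¹)ᴴ = ρ := by
  have hAdet : IsUnit A.det := (Matrix.isUnit_iff_isUnit_det A).1 hA
  have hAH : IsUnit (Aᴴ).det := by rw [Matrix.det_conjTranspose]; exact hAdet.star
  rw [Matrix.conjTranspose_nonsing_inv]
  rw [show A⁻¹ * (A * ρ * Aᴴ) * (Aᴴ)⁻¹ = (A⁻¹ * A) * (ρ * (Aᴴ * (Aᴴ)⁻¹)) by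
    simp only [Matrix.mul_assoc]]
  rw [Matrix.nonsing_inv_mul _ hAdet, Matrix.mul_nonsing_inv _ hAH, Matrix.mul_one,
    Matrix.one_mul]

lemma sandwich_cancel' {A : Mat d} (hA : IsUnit A) (ρ : Mat d) :
    A * (A⁻¹ * ρ * (A⁻¹)ᴴ) * Aᴴ = ρ := by
  have h := sandwich_cancel (Matrix.isUnit_nonsing_inv_iff.2 hA) ρ
  rwa [Matrix.nonsing_inv_nonsing_inv _ ((Matrix.isUnit_iff_isUnit_det A).1 hA)] at h

lemma rel_symm (T T' : Mat d →ₗ[ℂ] Mat d) (A B : Mat d) (hA : IsUnit A) (hB : IsUnit B)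
    (hrel : ∀ ρ : Mat d, T ρ = A * T' (B * ρ * Bᴴ) * Aᴴ) :
    ∀ ρ : Mat d, T' ρ = A⁻¹ * T (B⁻¹ * ρ * (B⁻¹)ᴴ) * (A⁻¹)ᴴ := by
  intro ρ
  rw [hrel (B⁻¹ * ρ * (B⁻¹)ᴴ), sandwich_cancel' hB]
  exact (sandwich_cancel hA (T' ρ)).symm

lemma divisible_of_rel (T T' : Mat d →ₗ[ℂ] Mat d) (hT' : IsChannel T')
    (A B : Mat d) (hA : IsUnit A) (hB : IsUnit B)
    (hrel : ∀ ρ : Mat d, T ρ = A * T' (B * ρ * Bᴴ) * Aᴴ) :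
    IsDivisible T → IsDivisible T' := by
  rintro ⟨T₁, T₂, h₁, h₂, hu₁, hu₂, hcomp⟩
  have hrel' := rel_symm T T' A B hA hB hrel
  have hAinv : IsUnit (A⁻¹) := Matrix.isUnit_nonsing_inv_iff.2 hA
  set P : Mat d := (A⁻¹)ᴴ * A⁻¹ with hPdef
  have hPpd : P.PosDef := posDef_conjTranspose_mul _ hAinv
  set X := Xmat T₁ P with hXdef
  have hXpd : X.PosDef := Xmat_posdef h₁.2 h₁.1 hPpd
  set Z := (psd_exists_sqrt hXpd.posSemidef).choose with hZdef
  have hZZ : Z * Z = X := (psd_exists_sqrt hXpd.posSemidef).choose_spec.2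
  have hZherm : Zᴴ = Z := (psd_exists_sqrt hXpd.posSemidef).choose_spec.1
  have hZdet : IsUnit Z.det := by
    have hXdet : IsUnit X.det := (Matrix.isUnit_iff_isUnit_det X).1 hXpd.isUnit
    rw [← hZZ, Matrix.det_mul] at hXdet
    exact isUnit_of_mul_isUnit_left hXdet
  set Y := Z⁻¹ with hYdef
  have hYherm : Yᴴ = Y := by rw [hYdef, Matrix.conjTranspose_nonsing_inv, hZherm]
  have hYZ : Y * Z = 1 := Matrix.nonsing_inv_mul Z hZdet
  have hZY : Z * Y = 1 := Matrix.mul_nonsing_inv Z hZdet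
  have hmid : ∀ W : Mat d, Y * (Z * W * Z) * Y = W := fun W => by
    rw [show Y * (Z * W * Z) * Y = (Y * Z) * (W * (Z * Y)) by simp only [Matrix.mul_assoc],
      hYZ, hZY, Matrix.mul_one, Matrix.one_mul]
  have hYXY : Y * X * Y = 1 := by
    rw [← hZZ, show Y * (Z * Z) * Y = (Y * Z) * (Z * Y) by simp only [Matrix.mul_assoc],
      hYZ, hZY, Matrix.mul_one]
  set T₁' := conjMap A⁻¹ ∘ₗ T₁ ∘ₗ conjMap Y with hT₁'def
  set T₂' := conjMap Z ∘ₗ T₂ ∘ₗ conjMap B⁻¹ with hT₂'def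
  have htp₁ : IsTracePreserving T₁' := by
    intro ρ
    show (A⁻¹ * T₁ (Y * ρ * Yᴴ) * (A⁻¹)ᴴ).trace = ρ.trace
    rw [hYherm, Matrix.trace_mul_cycle, show (A⁻¹)ᴴ * A⁻¹ * T₁ (Y * ρ * Y) = P * T₁ (Y * ρ * Y)
      from rfl, ← Xmat_trace T₁ P, ← hXdef]
    calc (X * (Y * ρ * Y)).trace
        = ((X * Y * ρ) * Y).trace := by simp only [Matrix.mul_assoc]
      _ = (Y * (X * Y * ρ)).trace := Matrix.trace_mul_comm _ _
      _ = ((Y * X * Y) * ρ).trace := by simp only [Matrix.mul_assoc]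
      _ = ρ.trace := by rw [hYXY, Matrix.one_mul]
  have hcomp' : T' = T₁' ∘ₗ T₂' := by
    apply LinearMap.ext; intro ρ
    show T' ρ = T₁' (T₂' ρ)
    show T' ρ = A⁻¹ * T₁ (Y * (Z * T₂ (B⁻¹ * ρ * (B⁻¹)ᴴ) * Zᴴ) * Yᴴ) * (A⁻¹)ᴴ
    rw [hZherm, hYherm, hmid]
    rw [show T₁ (T₂ (B⁻¹ * ρ * (B⁻¹)ᴴ)) = T (B⁻¹ * ρ * (B⁻¹)ᴴ) from by rw [hcomp]; rfl]
    exact hrel' ρ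
  have htp₂ : IsTracePreserving T₂' := by
    intro ρ
    have h5 : T₁' (T₂' ρ) = T' ρ := by rw [hcomp']; rfl
    rw [← htp₁ (T₂' ρ), h5, hT'.1]
  have hu₁' : ¬IsUnitaryConj T₁' := by
    rintro ⟨U, hU, hUeq⟩
    apply hu₁
    apply unitary_of_rankone T₁ h₁.1 (A * U * Z)
    intro σ
    have h5 := hUeq (Z * σ * Z)
    have h6 : T₁' (Z * σ * Z) = A⁻¹ * T₁ σ * (A⁻¹)ᴴ := by
      show A⁻¹ * T₁ (Y * (Z * σ * Z) * Yᴴ) * (A⁻¹)ᴴ = _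
      rw [hYherm, hmid]
    rw [h6] at h5
    have h7 := congrArg (fun W => A * W * Aᴴ) h5
    rw [sandwich_cancel' hA] at h7
    rw [h7]
    simp only [Matrix.conjTranspose_mul, hZherm, Matrix.mul_assoc]
  have hu₂' : ¬IsUnitaryConj T₂' := by
    rintro ⟨U, hU, hUeq⟩
    apply hu₂
    apply unitary_of_rankone T₂ h₂.1 (Y * U * B)
    intro σ
    have h5 := hUeq (B * σ * Bᴴ)
    have h6 : T₂' (B * σ * Bᴴ) = Z * T₂ σ * Zᴴ := by
      show Z * T₂ (B⁻¹ * (B * σ * Bᴴ) * (B⁻¹)ᴴ) * Zᴴ = _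
      rw [sandwich_cancel hB]
    rw [h6, hZherm] at h5
    have h7 := congrArg (fun W => Y * W * Y) h5
    rw [hmid] at h7
    rw [h7]
    simp only [Matrix.conjTranspose_mul, hYherm, Matrix.mul_assoc]
  exact ⟨T₁', T₂', ⟨htp₁, cp_sandwich h₁.2 _ _⟩, ⟨htp₂, cp_sandwich h₂.2 _ _⟩,
    hu₁', hu₂', hcomp'⟩


/-- if two channels `T` and `T'` on `M_d` are related by invertible
Kraus rank-one filtering operations, `T(ρ) = A · T'(B ρ Bᴴ) · Aᴴ` with `A, B`
invertible, then `T` is divisible iff `T'` is divisible (equivalently, `T` is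
indivisible iff `T'` is indivisible). -/
theorem divisible_iff_of_filtering {d : ℕ}
    (T T' : Mat d →ₗ[ℂ] Mat d) (hT : IsChannel T) (hT' : IsChannel T')
    (A B : Mat d) (hA : IsUnit A) (hB : IsUnit B)
    (hrel : ∀ ρ : Mat d, T ρ = A * T' (B * ρ * Bᴴ) * Aᴴ) :
    (IsDivisible T ↔ IsDivisible T') ∧ (¬IsDivisible T ↔ ¬IsDivisible T') := by
  have h1 : IsDivisible T → IsDivisible T' := divisible_of_rel T T' hT' A B hA hB hrel
  have h2 : IsDivisible T' → IsDivisible T :=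
    divisible_of_rel T' T hT A⁻¹ B⁻¹ (Matrix.isUnit_nonsing_inv_iff.2 hA)
      (Matrix.isUnit_nonsing_inv_iff.2 hB) (rel_symm T T' A B hA hB hrel)
  exact ⟨⟨h1, h2⟩, not_congr ⟨h1, h2⟩⟩
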